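/- Let X be a real Banach space, x₀ ∈ X, R > 0, and let A satisfy the variable Lipschitz condition on B[x₀,R] with a continuous nonnegative function k on [0,R]. Set a = ‖A x₀ − x₀‖ and a₋(r) = a − ∫₀^r k(t) dt. Then every fixed point x̄ of A in B[x₀,R] satisfies a₋(‖x̄ − x₀‖) ≤ ‖x̄ − x₀‖. Consequently, if a₋ has a fixed point in [0,R] and r_* denotes its smallest fixed point in [0,R], then every fixed point x̄ of A in B[x₀,R] satisfies ‖x̄ − x₀‖ ≥ r_*; i.e., A has no fixed point x with ‖x − x₀‖ < r_*. -/

import Mathlib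

open Set intervalIntegral MeasureTheory

lemma aux_primitive_bound (k : ℝ → ℝ) (R ρ : ℝ) (hρ : 0 < ρ) (hρR : ρ ≤ R)
    (hk_cont : ContinuousOn k (Icc 0 R))
    (f : ℝ → ℝ) (hf0 : f 0 = 0)
    (hfle : ∀ s t : ℝ, 0 ≤ s → s ≤ t → t ≤ ρ → |f t - f s| ≤ k t * (t - s)) :
    f ρ ≤ ∫ t in (0:ℝ)..ρ, k t := by
  have hR : 0 < R := lt_of_lt_of_le hρ hρR
  -- bound on k
  obtain ⟨M, hM⟩ := (isCompact_Icc).exists_bound_of_continuousOn hk_cont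
  have hM0 : 0 ≤ M := le_trans (norm_nonneg _) (hM 0 ⟨le_rfl, hR.le⟩)
  -- f is Lipschitz on Icc 0 ρ hence continuous
  have hflip : ∀ s t : ℝ, s ∈ Icc 0 ρ → t ∈ Icc 0 ρ → |f t - f s| ≤ M * |t - s| := by
    intro s t hs ht
    rcases le_total s t with h | h
    · calc |f t - f s| ≤ k t * (t - s) := hfle s t hs.1 h ht.2
        _ ≤ M * |t - s| := by
          rw [abs_of_nonneg (by linarith)]
          exact mul_le_mul_of_nonneg_right
            (le_trans (le_abs_self _) (hM t ⟨ht.1, le_trans ht.2 hρR⟩)) (by linarith)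
    · rw [abs_sub_comm, abs_sub_comm t s]
      calc |f s - f t| ≤ k s * (s - t) := hfle t s ht.1 h hs.2
        _ ≤ M * |s - t| := by
          rw [abs_of_nonneg (by linarith)]
          exact mul_le_mul_of_nonneg_right
            (le_trans (le_abs_self _) (hM s ⟨hs.1, le_trans hs.2 hρR⟩)) (by linarith)
  have hfcont : ContinuousOn f (Icc 0 ρ) := by
    apply LipschitzOnWith.continuousOn (K := Real.toNNReal M)
    apply LipschitzOnWith.of_dist_le_mul
    intro x hx y hy
    rw [Real.dist_eq, Real.dist_eq, Real.coe_toNNReal _ hM0]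
    exact hflip y x hy hx
  have hint : IntegrableOn k (Icc 0 ρ) := by
    exact (hk_cont.mono (Icc_subset_Icc le_rfl hρR)).integrableOn_compact isCompact_Icc
  have hBcont : ContinuousOn (fun u => ∫ t in (0:ℝ)..u, k t) (Icc 0 ρ) := by
    have := intervalIntegral.continuousOn_primitive_interval
      (f := k) (μ := volume) (a := 0) (b := ρ)
      (by rwa [uIcc_of_le hρ.le])
    rwa [uIcc_of_le hρ.le] at this
  have key : ∀ x ∈ Icc (0:ℝ) ρ, f x ≤ ∫ t in (0:ℝ)..x, k t := by
    apply image_le_of_liminf_slope_right_le_deriv_boundary hfcont _ hBcont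
      (B' := k)
    · -- HasDerivWithinAt
      intro x hx
      have hxR : x < R := lt_of_lt_of_le hx.2 hρR
      have hmem : Icc (0:ℝ) R ∈ nhdsWithin x (Ici x) := by
        apply Filter.mem_of_superset
          (Filter.inter_mem self_mem_nhdsWithin
            (mem_nhdsWithin_of_mem_nhds (Iio_mem_nhds hxR)))
        rintro z ⟨hz1, hz2⟩
        exact ⟨le_trans hx.1 hz1, le_of_lt hz2⟩
      have hmem' : Icc (0:ℝ) R ∈ nhdsWithin x (Ioi x) :=
        nhdsWithin_mono x Ioi_subset_Ici_self hmem
      apply integral_hasDerivWithinAt_right (t := Ioi x)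
      · exact ((hk_cont.mono (Icc_subset_Icc le_rfl hρR)).mono
          (by rw [uIcc_of_le hx.1]; exact Icc_subset_Icc le_rfl hx.2.le)).intervalIntegrable
      · exact ⟨Icc 0 R, hmem', hk_cont.aestronglyMeasurable measurableSet_Icc⟩
      · exact (hk_cont x ⟨hx.1, hxR.le⟩).mono_of_mem_nhdsWithin hmem'
    · -- slope bound
      intro x hx r hr
      apply Filter.Eventually.frequently
      have hcw : ContinuousWithinAt k (Ioc x ρ) x := by
        apply (hk_cont x ⟨hx.1, le_trans hx.2.le hρR⟩).mono
        exact fun z hz => ⟨le_trans hx.1 hz.1.le, le_trans hz.2 hρR⟩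
      have h1 : ∀ᶠ z in nhdsWithin x (Ioc x ρ), k z < r :=
        hcw.eventually_lt_const hr
      have h2 : ∀ᶠ z in nhdsWithin x (Ioc x ρ), z ∈ Ioc x ρ :=
        eventually_mem_nhdsWithin
      rw [nhdsWithin_Ioc_eq_nhdsGT hx.2] at h1 h2
      filter_upwards [h1, h2] with z hz1 hz2
      have hzx : 0 < z - x := by linarith [hz2.1]
      rw [slope_def_field, div_lt_iff₀ hzx]
      calc f z - f x ≤ |f z - f x| := le_abs_self _
        _ ≤ k z * (z - x) := hfle x z hx.1 hz2.1.le hz2.2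
        _ < r * (z - x) := by
          exact mul_lt_mul_of_pos_right hz1 hzx
    · simpa using hf0.le
  simpa using key ρ ⟨hρ.le, le_rfl⟩

/-- Lower estimate for fixed points: every fixed point `x̄` of `A` in `B[x₀,R]`
satisfies `a₋(‖x̄ - x₀‖) ≤ ‖x̄ - x₀‖`; consequently, if `r_*` is the smallest
fixed point of `a₋` in `[0,R]`, then `‖x̄ - x₀‖ ≥ r_*`. -/
theorem majorization_no_fixed_point_below
    {X : Type*} [NormedAddCommGroup X] [NormedSpace ℝ X] [CompleteSpace X]
    (x₀ : X) (R : ℝ) (hR : 0 < R) (A : X → X) (k : ℝ → ℝ)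
    (hk_cont : ContinuousOn k (Set.Icc 0 R))
    (hk_nonneg : ∀ t ∈ Set.Icc (0 : ℝ) R, 0 ≤ k t)
    (hLip : ∀ x₁ x₂ : X, ∀ r : ℝ, ‖x₁ - x₀‖ ≤ r → ‖x₂ - x₀‖ ≤ r →
      0 < r → r ≤ R → ‖A x₁ - A x₂‖ ≤ k r * ‖x₁ - x₂‖)
    (a : ℝ) (ha : a = ‖A x₀ - x₀‖)
    (aminus : ℝ → ℝ) (haminus : ∀ r : ℝ, aminus r = a - ∫ t in (0 : ℝ)..r, k t) :
    (∀ xbar : X, A xbar = xbar → ‖xbar - x₀‖ ≤ R →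
      aminus ‖xbar - x₀‖ ≤ ‖xbar - x₀‖) ∧
    (∀ rlow : ℝ, rlow ∈ Set.Icc (0 : ℝ) R → aminus rlow = rlow →
      (∀ s ∈ Set.Icc (0 : ℝ) R, aminus s = s → rlow ≤ s) →
      ∀ xbar : X, A xbar = xbar → ‖xbar - x₀‖ ≤ R → rlow ≤ ‖xbar - x₀‖) := by
  have part1 : ∀ xbar : X, A xbar = xbar → ‖xbar - x₀‖ ≤ R →
      aminus ‖xbar - x₀‖ ≤ ‖xbar - x₀‖ := by
    intro xbar hfix hle
    set ρ : ℝ := ‖xbar - x₀‖ with hρdef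
    rcases eq_or_lt_of_le (norm_nonneg (xbar - x₀)) with h0 | h0
    · -- ρ = 0 : xbar = x₀
      have hx : xbar = x₀ := sub_eq_zero.mp (norm_eq_zero.mp h0.symm)
      subst hx
      have ha0 : a = 0 := by rw [ha, hfix, sub_self, norm_zero]
      simp [haminus, ha0, hρdef]
    · -- ρ > 0
      set pt : ℝ → X := fun t => x₀ + (t / ρ) • (xbar - x₀) with hpt
      have hnorm : ∀ t : ℝ, 0 ≤ t → ‖pt t - x₀‖ = t := by
        intro t ht
        simp only [hpt, add_sub_cancel_left, norm_smul, Real.norm_eq_abs,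
          abs_of_nonneg (div_nonneg ht h0.le)]
        rw [abs_of_nonneg (show 0 ≤ t / ρ from div_nonneg ht h0.le)]; exact div_mul_cancel₀ t (ne_of_gt h0)
      have hρpos : 0 < ρ := h0
      have hdiff : ∀ s t : ℝ, ‖pt t - pt s‖ = |t - s| := by
        intro s t
        have heq : pt t - pt s = ((t - s) / ρ) • (xbar - x₀) := by
          simp only [hpt]
          rw [add_sub_add_left_eq_sub, ← sub_smul, sub_div]
        rw [heq, norm_smul, Real.norm_eq_abs, abs_div, ← hρdef, abs_of_pos hρpos,
          div_mul_cancel₀ _ hρpos.ne']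
      have key : ‖A (pt ρ) - A x₀‖ ≤ ∫ t in (0:ℝ)..ρ, k t := by
        refine aux_primitive_bound k R ρ h0 hle hk_cont
          (fun t => ‖A (pt t) - A x₀‖) ?_ ?_
        · simp [hpt]
        · intro s t hs hst htρ
          rcases eq_or_lt_of_le hst with rfl | hst'
          · simp
          · have ht0 : 0 < t := lt_of_le_of_lt hs hst'
            have h1 : ‖A (pt t) - A (pt s)‖ ≤ k t * (t - s) := by
              have := hLip (pt t) (pt s) t (le_of_eq (hnorm t ht0.le))
                (by rw [hnorm s hs]; exact hst) ht0 (le_trans htρ hle)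
              rwa [hdiff, abs_of_nonneg (by linarith : (0:ℝ) ≤ t - s)] at this
            calc |‖A (pt t) - A x₀‖ - ‖A (pt s) - A x₀‖| ≤ ‖A (pt t) - A (pt s)‖ := by
                  have := abs_norm_sub_norm_le (A (pt t) - A x₀) (A (pt s) - A x₀)
                  rwa [sub_sub_sub_cancel_right] at this
              _ ≤ k t * (t - s) := h1
      have hptρ : pt ρ = xbar := by
        simp [hpt, div_self (show ρ ≠ 0 from h0.ne')]
      rw [hptρ, hfix] at key
      have htri : a ≤ ‖xbar - A x₀‖ + ρ := by
        rw [ha]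
        calc ‖A x₀ - x₀‖ = ‖(A x₀ - xbar) + (xbar - x₀)‖ := by abel_nf
          _ ≤ ‖A x₀ - xbar‖ + ‖xbar - x₀‖ := norm_add_le _ _
          _ = ‖xbar - A x₀‖ + ρ := by rw [norm_sub_rev]
      rw [haminus]
      linarith
  refine ⟨part1, ?_⟩
  intro rlow hrlow hfixr hmin xbar hfix hle
  set ρ : ℝ := ‖xbar - x₀‖ with hρdef
  have hρ0 : 0 ≤ ρ := norm_nonneg _
  have h1 : aminus ρ ≤ ρ := part1 xbar hfix hle
  have ha0 : 0 ≤ a := ha ▸ norm_nonneg _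
  have hφcont : ContinuousOn (fun r => aminus r - r) (Set.Icc 0 ρ) := by
    have hint : MeasureTheory.IntegrableOn k (Set.Icc 0 ρ) := by
      exact ((hk_cont.mono (Set.Icc_subset_Icc le_rfl hle)).integrableOn_compact
        isCompact_Icc)
    have hB : ContinuousOn (fun u => ∫ t in (0:ℝ)..u, k t) (Set.Icc 0 ρ) := by
      have := intervalIntegral.continuousOn_primitive_interval
        (f := k) (μ := MeasureTheory.volume) (a := 0) (b := ρ)
        (by rwa [Set.uIcc_of_le hρ0])
      rwa [Set.uIcc_of_le hρ0] at this
    have : ContinuousOn aminus (Set.Icc 0 ρ) := by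
      have : aminus = fun r => a - ∫ t in (0:ℝ)..r, k t := funext haminus
      rw [this]
      exact continuousOn_const.sub hB
    exact this.sub continuousOn_id
  have hiv : (0:ℝ) ∈ Set.Icc (aminus ρ - ρ) (aminus 0 - 0) := by
    constructor
    · linarith
    · rw [haminus]
      simp [ha0]
  obtain ⟨s, hs, hφs⟩ := intermediate_value_Icc' hρ0 hφcont hiv
  have hsfix : aminus s = s := by
    have h := hφs
    simp only at h
    linarith
  exact le_trans (hmin s ⟨hs.1, le_trans hs.2 hle⟩ hsfix) hs.2
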